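/- Let φ : R → S be a surjective ring homomorphism between commutative local rings (so that φ is automatically a local homomorphism and induces an isomorphism of residue fields). Then φ induces a surjective ring homomorphism φ₊ : GW(R) → GW(S) with φ₊([a]) = [φ(a)] for every unit a of R, and the kernel of φ₊ is additively generated by the elements [a]·⟨⟨x⟩⟩ = [a] − [a·x] for units a, x of R with φ(x) = 1. In particular, φ₊ is an isomorphism whenever the induced map on square classes Rˣ/(Rˣ)² → Sˣ/(Sˣ)² is injective. -/

import Mathlib

noncomputable section

/-- The subgroup of squares of units of a commutative ring. -/
def squareUnits (R : Type) [CommRing R] : Subgroup Rˣ :=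
  (powMonoidHom 2 : Rˣ →* Rˣ).range

/-- The group of square classes `Rˣ/(Rˣ)²`. -/
def SqCl (R : Type) [CommRing R] : Type := Rˣ ⧸ squareUnits R

instance (R : Type) [CommRing R] : CommGroup (SqCl R) :=
  QuotientGroup.Quotient.commGroup (squareUnits R)

/-- The square class `[a]` of a unit `a`. -/
def cls {R : Type} [CommRing R] (a : Rˣ) : SqCl R := QuotientGroup.mk a

/-- The group ring `ℤ[Rˣ/(Rˣ)²]`. -/
abbrev GRing (R : Type) [CommRing R] := MonoidAlgebra ℤ (SqCl R)

/-- The generator `[a]` of the group ring, for a unit `a`. -/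
def gen {R : Type} [CommRing R] (a : Rˣ) : GRing R :=
  MonoidAlgebra.of ℤ (SqCl R) (cls a)

/-- The set of relations defining the Grothendieck–Witt ring of a (connected semi-)local ring:
`([a₁]+[a₂]+[a₃]+[a₄]) − ([b₁]+[b₂]+[b₃]+[b₄])` whenever there exists `P ∈ GL₄(R)` with
`P ⬝ diag(a₁,…,a₄) ⬝ Pᵀ = diag(b₁,…,b₄)`. -/
def gwRel (R : Type) [CommRing R] : Set (GRing R) :=
  {x | ∃ (a b : Fin 4 → Rˣ) (P : Matrix (Fin 4) (Fin 4) R),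
    IsUnit P.det ∧
    P * Matrix.diagonal (fun i => (a i : R)) * P.transpose =
      Matrix.diagonal (fun i => (b i : R)) ∧
    x = (∑ i, gen (a i)) - (∑ i, gen (b i))}

/-- The (symmetric) Grothendieck–Witt ring of `R`, presented à la Knebusch–Rosenberg–Ware. -/
abbrev GW (R : Type) [CommRing R] := GRing R ⧸ Ideal.span (gwRel R)

/-- The class `[a] ∈ GW(R)` of a unit `a`. -/
def gw {R : Type} [CommRing R] (a : Rˣ) : GW R :=
  Ideal.Quotient.mk (Ideal.span (gwRel R)) (gen a)

/-- The (symmetric) Witt ring of `R` : the quotient of `GW(R)` by the ideal generated by the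
hyperbolic element `[1] + [-1]`. -/
abbrev Wr (R : Type) [CommRing R] := GW R ⧸ Ideal.span {gw (R := R) 1 + gw (-1)}

/-- The class in the Witt ring of a unit `a`. -/
def wcl {R : Type} [CommRing R] (a : Rˣ) : Wr R :=
  Ideal.Quotient.mk (Ideal.span {gw (R := R) 1 + gw (-1)}) (gw a)

set_option synthInstance.maxHeartbeats 800000
namespace GWAux
open Matrix

set_option synthInstance.maxHeartbeats 800000

variable {R : Type} [CommRing R]

lemma cls_mul (a b : Rˣ) : cls (a * b) = cls a * cls b := rfl

lemma cls_one : cls (1 : Rˣ) = 1 := rfl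

lemma cls_sq (t : Rˣ) : cls (t * t) = 1 := by
  unfold cls
  refine (QuotientGroup.eq_one_iff (N := squareUnits R) (t * t)).mpr ?_
  exact ⟨t, by simp [powMonoidHom_apply, pow_two]⟩

lemma gen_mul (a b : Rˣ) : gen (a * b) = gen a * gen b := by
  unfold gen; rw [cls_mul, _root_.map_mul]

lemma gen_one : gen (1 : Rˣ) = 1 := by unfold gen; rw [cls_one, _root_.map_one]

lemma gw_mul (a b : Rˣ) : gw (a * b) = gw a * gw b := by
  unfold gw; rw [gen_mul, _root_.map_mul]

lemma gw_one : gw (1 : Rˣ) = 1 := by unfold gw; rw [gen_one, _root_.map_one]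

lemma gw_sq (t : Rˣ) : gw (t * t) = 1 := by
  unfold gw gen; rw [cls_sq, _root_.map_one, _root_.map_one]

/-- equal mod `gwRel` sums -/
lemma gw_sum_eq_of_rel (a b : Fin 4 → Rˣ) (P : Matrix (Fin 4) (Fin 4) R)
    (hdet : IsUnit P.det)
    (heq : P * Matrix.diagonal (fun i => (a i : R)) * P.transpose =
      Matrix.diagonal (fun i => (b i : R))) :
    (∑ i, gw (a i)) = ∑ i, gw (b i) := by
  unfold gw
  rw [← map_sum, ← map_sum, Ideal.Quotient.eq]
  exact Ideal.subset_span ⟨a, b, P, hdet, heq, rfl⟩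

variable {T : Type} [CommRing T]

lemma sq_ker (F : Rˣ →* T) (hsq : ∀ t : Rˣ, F (t * t) = 1) :
    squareUnits R ≤ F.ker := by
  rintro x ⟨t, rfl⟩
  have : powMonoidHom 2 t = t * t := by simp [powMonoidHom_apply, pow_two]
  rw [MonoidHom.mem_ker, this, hsq]

def sqClHom (F : Rˣ →* T) (hsq : ∀ t : Rˣ, F (t * t) = 1) : SqCl R →* T :=
  QuotientGroup.lift (squareUnits R) F (sq_ker F hsq)

lemma sqClHom_cls (F : Rˣ →* T) (hsq : ∀ t : Rˣ, F (t * t) = 1) (a : Rˣ) :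
    sqClHom F hsq (cls a) = F a :=
  QuotientGroup.lift_mk (squareUnits R) (sq_ker F hsq) a

def gringHom (F : Rˣ →* T) (hsq : ∀ t : Rˣ, F (t * t) = 1) : GRing R →+* T :=
  ((MonoidAlgebra.lift ℤ T (SqCl R)) (sqClHom F hsq)).toRingHom

lemma gringHom_gen (F : Rˣ →* T) (hsq : ∀ t : Rˣ, F (t * t) = 1) (a : Rˣ) :
    gringHom F hsq (gen a) = F a := by
  show ((MonoidAlgebra.lift ℤ T (SqCl R)) (sqClHom F hsq))
    (MonoidAlgebra.of ℤ (SqCl R) (cls a)) = F a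
  rw [MonoidAlgebra.lift_of]
  exact sqClHom_cls F hsq a

/-- Construct a ring hom out of `GW R`. -/
def mkGW (F : Rˣ →* T)
    (hsq : ∀ t : Rˣ, F (t * t) = 1)
    (hrel : ∀ (a b : Fin 4 → Rˣ) (P : Matrix (Fin 4) (Fin 4) R), IsUnit P.det →
      P * Matrix.diagonal (fun i => (a i : R)) * P.transpose
        = Matrix.diagonal (fun i => (b i : R)) →
      (∑ i, F (a i)) = ∑ i, F (b i)) : GW R →+* T := by
  refine Ideal.Quotient.lift _ (gringHom F hsq) ?_
  intro x hx
  refine (Ideal.span_le (I := RingHom.ker (gringHom F hsq))).mpr ?_ hx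
  rintro y ⟨a, b, P, hdet, heq, rfl⟩
  rw [SetLike.mem_coe, RingHom.mem_ker]
  have h2 : (gringHom F hsq) ((∑ i, gen (a i)) - ∑ i, gen (b i))
      = (∑ i, F (a i)) - ∑ i, F (b i) := by
    rw [map_sub, map_sum, map_sum,
      Finset.sum_congr rfl fun i _ => gringHom_gen F hsq (a i),
      Finset.sum_congr rfl fun i _ => gringHom_gen F hsq (b i)]
  rw [h2, hrel a b P hdet heq, sub_self]

lemma mkGW_gw (F : Rˣ →* T) (hsq) (hrel) (a : Rˣ) :
    mkGW F hsq hrel (gw a) = F a := by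
  unfold mkGW gw
  show gringHom F hsq (gen a) = F a
  exact gringHom_gen F hsq a

lemma unit_add_mem [IsLocalRing R] {u x : R} (hu : IsUnit u)
    (hx : x ∈ IsLocalRing.maximalIdeal R) : IsUnit (u + x) := by
  by_contra h
  have h1 : u + x ∈ IsLocalRing.maximalIdeal R :=
    (IsLocalRing.mem_maximalIdeal _).mpr h
  have h2 : u ∈ IsLocalRing.maximalIdeal R := by
    have := Ideal.sub_mem _ h1 hx
    simpa using this
  exact (IsLocalRing.mem_maximalIdeal u).mp h2 hu

/-- One step of symmetric Gaussian elimination (completing the square). -/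
lemma step (I : Ideal R) (k : Fin 4) (M : Matrix (Fin 4) (Fin 4) R)
    (hsym : Mᵀ = M) (hk : IsUnit (M k k))
    (hoff : ∀ j l, j ≠ l → M j l ∈ I)
    (hz : ∀ j l, j ≠ l → (j < k ∨ l < k) → M j l = 0) :
    ∃ E : Matrix (Fin 4) (Fin 4) R, IsUnit E.det ∧
      (E * M * Eᵀ)ᵀ = E * M * Eᵀ ∧
      (∀ j l, (E * M * Eᵀ) j l - M j l ∈ I) ∧
      (∀ j l, j ≠ l → (j ≤ k ∨ l ≤ k) → (E * M * Eᵀ) j l = 0) := by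
  classical
  set c : Fin 4 → R := fun j => if k < j then -(Ring.inverse (M k k) * M j k) else 0 with hc
  set A : Matrix (Fin 4) (Fin 4) R := Matrix.of (fun j l => if l = k then c j else 0) with hA
  have hck : c k = 0 := by simp [hc]
  have hcI : ∀ j, c j ∈ I := by
    intro j
    by_cases h : k < j
    · simp only [hc, if_pos h]
      exact neg_mem (Ideal.mul_mem_left I _ (hoff j k (ne_of_gt h)))
    · simp only [hc, if_neg h]; exact zero_mem I
  have hcM : ∀ j, k < j → c j * M k k = -(M j k) := by
    intro j h
    simp only [hc, if_pos h]
    rw [neg_mul, mul_comm (Ring.inverse (M k k)) (M j k), mul_assoc,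
      Ring.inverse_mul_cancel _ hk, mul_one]
  have hMs : ∀ p q, M p q = M q p := by
    intro p q; exact congrFun (congrFun hsym.symm p) q
  set E : Matrix (Fin 4) (Fin 4) R := 1 + A with hE
  have hAM : ∀ (X : Matrix (Fin 4) (Fin 4) R) j l, (A * X) j l = c j * X k l := by
    intro X j l
    rw [Matrix.mul_apply, Finset.sum_eq_single k]
    · simp [hA]
    · intro i _ hik; simp [hA, hik]
    · simp
  have hXA : ∀ (X : Matrix (Fin 4) (Fin 4) R) j l, (X * Aᵀ) j l = X j k * c l := by
    intro X j l
    rw [Matrix.mul_apply, Finset.sum_eq_single k]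
    · simp [hA, Matrix.transpose_apply]
    · intro i _ hik; simp [hA, Matrix.transpose_apply, hik]
    · simp
  have hEM : ∀ j l, (E * M) j l = M j l + c j * M k l := by
    intro j l
    have : E * M = M + A * M := by rw [hE, add_mul, one_mul]
    rw [this, Matrix.add_apply, hAM]
  have key : ∀ j l, (E * M * Eᵀ) j l = M j l + c j * M k l + (M j k + c j * M k k) * c l := by
    intro j l
    have hEt : Eᵀ = 1 + Aᵀ := by rw [hE, Matrix.transpose_add, Matrix.transpose_one]
    have : E * M * Eᵀ = E * M + (E * M) * Aᵀ := by rw [hEt, mul_add, mul_one]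
    rw [this, Matrix.add_apply, hEM, hXA, hEM]
  have hAA : A * A = 0 := by
    ext j l
    rw [hAM A j l]
    have : A k l = 0 := by simp [hA, hck]
    rw [this, mul_zero, Matrix.zero_apply]
  have hdet : IsUnit E.det := by
    have e1 : (1 + A) * (1 - A) = 1 - A * A := by noncomm_ring
    have e2 : (1 - A) * (1 + A) = 1 - A * A := by noncomm_ring
    have h1 : E * (1 - A) = 1 := by rw [hE, e1, hAA, sub_zero]
    have h2 : (1 - A) * E = 1 := by rw [hE, e2, hAA, sub_zero]
    exact (Matrix.isUnit_iff_isUnit_det E).mp ⟨⟨E, 1 - A, h1, h2⟩, rfl⟩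
  refine ⟨E, hdet, ?_, ?_, ?_⟩
  · ext j l
    rw [Matrix.transpose_apply, key, key, hMs l j, hMs k j, hMs l k]
    ring
  · intro j l
    have : (E * M * Eᵀ) j l - M j l = c j * M k l + (M j k + c j * M k k) * c l := by
      rw [key]; ring
    rw [this]
    exact add_mem (Ideal.mul_mem_right _ I (hcI j)) (Ideal.mul_mem_left I _ (hcI l))
  · intro j l hjl hle
    rw [key]
    by_cases hl : l < k
    · have hck' : ¬ k < l := by omega
      rw [hz j l hjl (Or.inr hl), hz k l (by omega) (Or.inr hl)]
      simp only [hc, if_neg hck']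
      ring
    · by_cases hj : j < k
      · have hcj' : ¬ k < j := by omega
        rw [hz j l hjl (Or.inl hj), hz j k (by omega) (Or.inl hj)]
        simp only [hc, if_neg hcj']
        ring
      · -- j ≥ k, l ≥ k, j ≠ l, and j ≤ k ∨ l ≤ k
        rcases hle with hle | hle
        · -- j = k
          have hjk : j = k := le_antisymm hle (not_lt.mp hj)
          have hkl : k < l := lt_of_le_of_ne (not_lt.mp hl)
            (fun h => hjl (hjk.trans h))
          rw [hjk, hck]
          linear_combination hcM l hkl + hMs k l
        · have hlk : l = k := le_antisymm hle (not_lt.mp hl)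
          have hkj : k < j := lt_of_le_of_ne (not_lt.mp hj)
            (fun h => hjl ((hlk.trans h).symm))
          rw [hlk, hck, hcM j hkj]
          ring

lemma diagonalize [IsLocalRing R] (I : Ideal R) (hIm : I ≤ IsLocalRing.maximalIdeal R)
    (M : Matrix (Fin 4) (Fin 4) R) (hsym : Mᵀ = M)
    (hdiag : ∀ i, IsUnit (M i i)) (hoff : ∀ j l, j ≠ l → M j l ∈ I) :
    ∃ E : Matrix (Fin 4) (Fin 4) R, IsUnit E.det ∧
      (∀ j l, j ≠ l → (E * M * Eᵀ) j l = 0) ∧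
      (∀ i, IsUnit ((E * M * Eᵀ) i i)) ∧
      (∀ i, (E * M * Eᵀ) i i - M i i ∈ I) := by
  -- invariant-preserving iteration
  have inv_step : ∀ (N : Matrix (Fin 4) (Fin 4) R),
      (∀ j l, N j l - M j l ∈ I) → (∀ i, IsUnit (N i i)) := by
    intro N hNM i
    have : N i i = M i i + (N i i - M i i) := by ring
    rw [this]
    exact unit_add_mem (hdiag i) (hIm (hNM i i))
  have off_step : ∀ (N : Matrix (Fin 4) (Fin 4) R),
      (∀ j l, N j l - M j l ∈ I) → (∀ j l, j ≠ l → N j l ∈ I) := by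
    intro N hNM j l hjl
    have : N j l = (N j l - M j l) + M j l := by ring
    rw [this]
    exact add_mem (hNM j l) (hoff j l hjl)
  -- step 0
  obtain ⟨E₀, hd₀, hs₀, hI₀, hz₀⟩ := step I 0 M hsym (hdiag 0) hoff
    (fun j l hjl h => by rcases h with h | h <;> exact absurd h (by omega))
  set M₁ := E₀ * M * E₀ᵀ with hM₁
  have hI₁ : ∀ j l, M₁ j l - M j l ∈ I := hI₀
  -- step 1
  obtain ⟨E₁, hd₁, hs₁, hI₁', hz₁⟩ := step I 1 M₁ hs₀ (inv_step M₁ hI₁ 1) (off_step M₁ hI₁)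
    (by
      intro j l hjl h
      refine hz₀ j l hjl ?_
      rcases h with h | h
      · left; omega
      · right; omega)
  set M₂ := E₁ * M₁ * E₁ᵀ with hM₂
  have hI₂ : ∀ j l, M₂ j l - M j l ∈ I := by
    intro j l
    have : M₂ j l - M j l = (M₂ j l - M₁ j l) + (M₁ j l - M j l) := by ring
    rw [this]; exact add_mem (hI₁' j l) (hI₁ j l)
  -- step 2
  obtain ⟨E₂, hd₂, hs₂, hI₂', hz₂⟩ := step I 2 M₂ hs₁ (inv_step M₂ hI₂ 2) (off_step M₂ hI₂)
    (by
      intro j l hjl h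
      refine hz₁ j l hjl ?_
      rcases h with h | h
      · left; omega
      · right; omega)
  set M₃ := E₂ * M₂ * E₂ᵀ with hM₃
  have hI₃ : ∀ j l, M₃ j l - M j l ∈ I := by
    intro j l
    have : M₃ j l - M j l = (M₃ j l - M₂ j l) + (M₂ j l - M j l) := by ring
    rw [this]; exact add_mem (hI₂' j l) (hI₂ j l)
  refine ⟨E₂ * E₁ * E₀, ?_, ?_, ?_, ?_⟩
  · rw [Matrix.det_mul, Matrix.det_mul]
    exact (hd₂.mul hd₁).mul hd₀
  all_goals
    have hEE : (E₂ * E₁ * E₀) * M * (E₂ * E₁ * E₀)ᵀ = M₃ := by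
      rw [hM₃, hM₂, hM₁, Matrix.transpose_mul, Matrix.transpose_mul]
      simp only [Matrix.mul_assoc]
  · intro j l hjl
    rw [hEE]
    refine hz₂ j l hjl ?_
    have hj4 : j.val < 4 := j.isLt
    have hl4 : l.val < 4 := l.isLt
    have hne : j.val ≠ l.val := fun h => hjl (Fin.ext h)
    rcases Nat.lt_or_ge j.val 3 with h | h
    · left; exact Fin.le_def.mpr (by omega)
    · right; exact Fin.le_def.mpr (by omega)
  · intro i; rw [hEE]; exact inv_step M₃ hI₃ i
  · intro i; rw [hEE]; exact hI₃ i i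

section Surj

variable {S : Type} [CommRing S] [IsLocalRing R] [IsLocalRing S]
variable (φ : R →+* S) (hφ : Function.Surjective φ)

lemma ker_le_max : RingHom.ker φ ≤ IsLocalRing.maximalIdeal R := by
  intro x hx
  rw [IsLocalRing.mem_maximalIdeal, mem_nonunits_iff]
  intro hu
  have : IsUnit (φ x) := hu.map φ
  rw [RingHom.mem_ker.mp hx] at this
  exact not_isUnit_zero this

include hφ in
lemma isUnit_of_map {r : R} (h : IsUnit (φ r)) : IsUnit r := by
  obtain ⟨s, hs⟩ := h.exists_left_inv
  obtain ⟨t, rfl⟩ := hφ s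
  have hker : φ (t * r - 1) = 0 := by
    rw [map_sub, _root_.map_mul, _root_.map_one, hs, sub_self]
  have hmem : t * r - 1 ∈ IsLocalRing.maximalIdeal R :=
    ker_le_max φ (RingHom.mem_ker.mpr hker)
  have : IsUnit (t * r) := by
    have : t * r = 1 + (t * r - 1) := by ring
    rw [this]
    exact unit_add_mem isUnit_one hmem
  exact isUnit_of_mul_isUnit_right this

include hφ in
lemma umap_surj : Function.Surjective (Units.map (φ : R →* S)) := by
  intro b
  obtain ⟨r, hr⟩ := hφ (b : S)
  have hu : IsUnit r := isUnit_of_map φ hφ (by rw [hr]; exact b.isUnit)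
  refine ⟨hu.unit, Units.ext ?_⟩
  show φ (hu.unit : R) = (b : S)
  rw [IsUnit.unit_spec, hr]

lemma keyL (Kid : Ideal (GW R))
    (hKgen : ∀ u x : Rˣ, φ ((x : Rˣ) : R) = 1 → gw u - gw (u * x) ∈ Kid)
    (v w : Rˣ) (h : Units.map (φ : R →* S) v = Units.map (φ : R →* S) w) :
    Ideal.Quotient.mk Kid (gw v) = Ideal.Quotient.mk Kid (gw w) := by
  set x := v⁻¹ * w with hx
  have hvx : v * x = w := by rw [hx, mul_inv_cancel_left]
  have hux : Units.map (φ : R →* S) x = 1 := by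
    rw [hx, _root_.map_mul, map_inv, h, inv_mul_cancel]
  have hφx : φ ((x : Rˣ) : R) = 1 := by
    have h1 : φ ((x : Rˣ) : R) = ((Units.map (φ : R →* S) x : Sˣ) : S) := rfl
    rw [h1, hux, Units.val_one]
  rw [Ideal.Quotient.eq, ← hvx]
  exact hKgen v x hφx

include hφ in
lemma big (Kid : Ideal (GW R))
    (hKgen : ∀ u x : Rˣ, φ ((x : Rˣ) : R) = 1 → gw u - gw (u * x) ∈ Kid)
    (b b' : Fin 4 → Sˣ) (Q : Matrix (Fin 4) (Fin 4) S)
    (hQ : IsUnit Q.det)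
    (hQeq : Q * Matrix.diagonal (fun i => (b i : S)) * Q.transpose
      = Matrix.diagonal (fun i => (b' i : S)))
    (a a' : Fin 4 → Rˣ) (ha : ∀ i, φ ((a i : Rˣ) : R) = ((b i : Sˣ) : S))
    (ha' : ∀ i, φ ((a' i : Rˣ) : R) = ((b' i : Sˣ) : S)) :
    Ideal.Quotient.mk Kid (∑ i, gw (a i)) = Ideal.Quotient.mk Kid (∑ i, gw (a' i)) := by
  classical
  set P : Matrix (Fin 4) (Fin 4) R := Matrix.of (fun i j => Function.surjInv hφ (Q i j)) with hP
  have hPmap : P.map φ = Q := by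
    ext i j
    exact Function.surjInv_eq hφ (Q i j)
  have hPdet : IsUnit P.det := by
    apply isUnit_of_map φ hφ
    rw [RingHom.map_det, RingHom.mapMatrix_apply, hPmap]
    exact hQ
  set D : Matrix (Fin 4) (Fin 4) R := Matrix.diagonal (fun i => ((a i : Rˣ) : R)) with hD
  set M : Matrix (Fin 4) (Fin 4) R := P * D * Pᵀ with hM
  have hMmap : M.map φ = Matrix.diagonal (fun i => ((b' i : Sˣ) : S)) := by
    have h1 : M.map φ = φ.mapMatrix M := (RingHom.mapMatrix_apply (f := φ) (M := M)).symm
    rw [h1, hM, _root_.map_mul, _root_.map_mul,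
      RingHom.mapMatrix_apply, RingHom.mapMatrix_apply, RingHom.mapMatrix_apply,
      hPmap, Matrix.transpose_map, hPmap, hD, Matrix.diagonal_map (map_zero φ)]
    rw [show (fun m => φ ((a m : Rˣ) : R)) = (fun m => ((b m : Sˣ) : S)) from funext ha]
    exact hQeq
  have hsym : Mᵀ = M := by
    rw [hM, Matrix.transpose_mul, Matrix.transpose_mul, Matrix.transpose_transpose,
      hD, Matrix.diagonal_transpose, Matrix.mul_assoc]
  have hdiagU : ∀ i, IsUnit (M i i) := by
    intro i
    apply isUnit_of_map φ hφ
    have h1 : φ (M i i) = (M.map φ) i i := rfl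
    rw [h1, hMmap, Matrix.diagonal_apply_eq]
    exact (b' i).isUnit
  have hoffI : ∀ j l, j ≠ l → M j l ∈ RingHom.ker φ := by
    intro j l hjl
    rw [RingHom.mem_ker]
    have h1 : φ (M j l) = (M.map φ) j l := rfl
    rw [h1, hMmap, Matrix.diagonal_apply_ne _ hjl]
  obtain ⟨E, hEdet, hEz, hEu, hEI⟩ :=
    diagonalize (RingHom.ker φ) (ker_le_max φ) M hsym hdiagU hoffI
  set u : Fin 4 → Rˣ := fun i => (hEu i).unit with hu
  have hNdiag : E * M * Eᵀ = Matrix.diagonal (fun i => ((u i : Rˣ) : R)) := by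
    ext j l
    by_cases h : j = l
    · subst h; rw [Matrix.diagonal_apply_eq]; exact ((hEu j).unit_spec).symm
    · rw [Matrix.diagonal_apply_ne _ h]; exact hEz j l h
  have hrelR : (∑ i, gw (a i)) = ∑ i, gw (u i) := by
    apply gw_sum_eq_of_rel a u (E * P)
    · rw [Matrix.det_mul]; exact hEdet.mul hPdet
    · have h1 : (E * P) * Matrix.diagonal (fun i => ((a i : Rˣ) : R)) * (E * P).transpose
          = E * M * Eᵀ := by
        rw [hM, hD, Matrix.transpose_mul]
        simp only [Matrix.mul_assoc]
      rw [h1, hNdiag]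
  have humap : ∀ i, Units.map (φ : R →* S) (u i) = Units.map (φ : R →* S) (a' i) := by
    intro i
    apply Units.ext
    show φ ((u i : Rˣ) : R) = φ (((a' i) : Rˣ) : R)
    rw [ha' i]
    have h1 : ((u i : Rˣ) : R) = (E * M * Eᵀ) i i := (hEu i).unit_spec
    rw [h1]
    have h2 : (E * M * Eᵀ) i i = M i i + ((E * M * Eᵀ) i i - M i i) := by ring
    rw [h2, map_add, RingHom.mem_ker.mp (hEI i), add_zero]
    have h3 : φ (M i i) = (M.map φ) i i := rfl
    rw [h3, hMmap, Matrix.diagonal_apply_eq]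
  rw [hrelR, map_sum, map_sum]
  exact Finset.sum_congr rfl fun i _ => keyL φ Kid hKgen (u i) (a' i) (humap i)

def genset : Set (GW R) :=
  {z : GW R | ∃ a x : Rˣ, φ (x : R) = 1 ∧ z = gw a - gw (a * x)}

omit [IsLocalRing R] [IsLocalRing S] in
lemma mulmem (z w : GW R) (hw : w ∈ AddSubgroup.closure (genset φ)) :
    z * w ∈ AddSubgroup.closure (genset φ) := by
  refine AddSubgroup.closure_induction
    (p := fun w _ => z * w ∈ AddSubgroup.closure (genset φ)) ?_ ?_ ?_ ?_ hw
  · rintro w ⟨a, x, hx, rfl⟩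
    obtain ⟨c, rfl⟩ := Ideal.Quotient.mk_surjective z
    induction c using MonoidAlgebra.induction_on with
    | of g =>
      obtain ⟨v, rfl⟩ := QuotientGroup.mk_surjective g
      have h1 : Ideal.Quotient.mk (Ideal.span (gwRel R))
          (MonoidAlgebra.of ℤ (SqCl R) (QuotientGroup.mk v)) = gw v := rfl
      rw [h1, mul_sub, ← gw_mul, ← gw_mul, ← mul_assoc]
      exact AddSubgroup.subset_closure ⟨v * a, x, hx, rfl⟩
    | add f g hf hg =>
      rw [map_add, add_mul]
      exact add_mem hf hg
    | smul r f hf =>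
      rw [map_zsmul, smul_mul_assoc]
      exact zsmul_mem hf r
  · show z * (0 : GW R) ∈ _
    rw [mul_zero]; exact zero_mem _
  · intro u v _ _ hu hv
    show z * (u + v) ∈ _
    rw [mul_add]; exact add_mem hu hv
  · intro u _ hu
    show z * (-u) ∈ _
    have h : z * (-u) = -(z * u) := by ring
    rw [h]; exact neg_mem hu

omit [IsLocalRing R] [IsLocalRing S] in
/-- The kernel ideal. -/
def Kid : Ideal (GW R) where
  carrier := (AddSubgroup.closure (genset φ) : Set (GW R))
  add_mem' := fun h h' => add_mem h h'
  zero_mem' := zero_mem _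
  smul_mem' := fun z w hw => by simpa [smul_eq_mul] using mulmem φ z w hw

omit [IsLocalRing R] [IsLocalRing S] in
lemma mem_Kid {z : GW R} : z ∈ Kid φ ↔ z ∈ AddSubgroup.closure (genset φ) := Iff.rfl

omit [IsLocalRing R] [IsLocalRing S] in
lemma Kid_gen : ∀ u x : Rˣ, φ ((x : Rˣ) : R) = 1 → gw u - gw (u * x) ∈ Kid φ :=
  fun u x hx => AddSubgroup.subset_closure ⟨u, x, hx, rfl⟩

omit [IsLocalRing R] [IsLocalRing S] in
/-- The monoid hom underlying `ψ`. -/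
def Fpsi : Rˣ →* GW S where
  toFun := fun a => gw (Units.map (φ : R →* S) a)
  map_one' := by
    show gw (Units.map (φ : R →* S) 1) = 1
    rw [_root_.map_one, gw_one]
  map_mul' := fun a b => by
    show gw (Units.map (φ : R →* S) (a * b))
      = gw (Units.map (φ : R →* S) a) * gw (Units.map (φ : R →* S) b)
    rw [_root_.map_mul, gw_mul]

omit [IsLocalRing R] [IsLocalRing S] in
lemma Fpsi_sq (t : Rˣ) : Fpsi φ (t * t) = 1 := by
  show gw (Units.map (φ : R →* S) (t * t)) = 1
  rw [_root_.map_mul, gw_sq]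

omit [IsLocalRing R] [IsLocalRing S] in
lemma Fpsi_rel : ∀ (a b : Fin 4 → Rˣ) (P : Matrix (Fin 4) (Fin 4) R), IsUnit P.det →
    P * Matrix.diagonal (fun i => (a i : R)) * P.transpose
      = Matrix.diagonal (fun i => (b i : R)) →
    (∑ i, Fpsi φ (a i)) = ∑ i, Fpsi φ (b i) := by
  intro a b P hdet heq
  show (∑ i, gw (Units.map (φ : R →* S) (a i))) = ∑ i, gw (Units.map (φ : R →* S) (b i))
  apply gw_sum_eq_of_rel _ _ (φ.mapMatrix P)
  · rw [← RingHom.map_det]; exact hdet.map φ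
  · have h0 := congrArg (fun X => φ.mapMatrix X) heq
    simp only [_root_.map_mul] at h0
    simp only [RingHom.mapMatrix_apply, Matrix.transpose_map,
      Matrix.diagonal_map (map_zero φ)] at h0
    rw [RingHom.mapMatrix_apply]
    rw [show (fun i => ((Units.map (φ : R →* S) (a i) : Sˣ) : S))
        = fun m => φ ((a m : Rˣ) : R) from rfl,
      show (fun i => ((Units.map (φ : R →* S) (b i) : Sˣ) : S))
        = fun m => φ ((b m : Rˣ) : R) from rfl]
    exact h0

/-- `ψ`. -/
def psiHom : GW R →+* GW S := mkGW (Fpsi φ) (Fpsi_sq φ) (Fpsi_rel φ)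

omit [IsLocalRing R] [IsLocalRing S] in
lemma psiHom_gw (a : Rˣ) : psiHom φ (gw a) = gw (Units.map (φ : R →* S) a) :=
  mkGW_gw (Fpsi φ) (Fpsi_sq φ) (Fpsi_rel φ) a

/-- A chosen unit lift. -/
def lHat (hφ : Function.Surjective φ) : Sˣ → Rˣ := Function.surjInv (umap_surj φ hφ)

lemma lHat_spec (hφ : Function.Surjective φ) (b : Sˣ) :
    Units.map (φ : R →* S) (lHat φ hφ b) = b :=
  Function.surjInv_eq (umap_surj φ hφ) b

/-- The monoid hom underlying `θ`. -/
def Ftheta (hφ : Function.Surjective φ) : Sˣ →* GW R ⧸ Kid φ where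
  toFun := fun b => Ideal.Quotient.mk (Kid φ) (gw (lHat φ hφ b))
  map_one' := by
    have h := keyL φ (Kid φ) (Kid_gen φ) (lHat φ hφ 1) 1
      (by rw [lHat_spec, _root_.map_one])
    show Ideal.Quotient.mk (Kid φ) (gw (lHat φ hφ 1)) = 1
    rw [h, gw_one, _root_.map_one]
  map_mul' := fun b b' => by
    have h := keyL φ (Kid φ) (Kid_gen φ) (lHat φ hφ (b * b')) (lHat φ hφ b * lHat φ hφ b')
      (by rw [lHat_spec, _root_.map_mul, lHat_spec, lHat_spec])
    show Ideal.Quotient.mk (Kid φ) (gw (lHat φ hφ (b * b')))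
      = Ideal.Quotient.mk (Kid φ) (gw (lHat φ hφ b)) * Ideal.Quotient.mk (Kid φ) (gw (lHat φ hφ b'))
    rw [h, gw_mul, _root_.map_mul]

lemma Ftheta_sq (hφ : Function.Surjective φ) (t : Sˣ) : Ftheta φ hφ (t * t) = 1 := by
  have h := keyL φ (Kid φ) (Kid_gen φ) (lHat φ hφ (t * t)) (lHat φ hφ t * lHat φ hφ t)
    (by rw [lHat_spec, _root_.map_mul, lHat_spec])
  show Ideal.Quotient.mk (Kid φ) (gw (lHat φ hφ (t * t))) = 1
  rw [h, gw_sq, _root_.map_one]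

lemma Ftheta_rel (hφ : Function.Surjective φ) :
    ∀ (b b' : Fin 4 → Sˣ) (Q : Matrix (Fin 4) (Fin 4) S), IsUnit Q.det →
    Q * Matrix.diagonal (fun i => (b i : S)) * Q.transpose
      = Matrix.diagonal (fun i => (b' i : S)) →
    (∑ i, Ftheta φ hφ (b i)) = ∑ i, Ftheta φ hφ (b' i) := by
  intro b b' Q hQ hQeq
  have h := big φ hφ (Kid φ) (Kid_gen φ) b b' Q hQ hQeq
    (fun i => lHat φ hφ (b i)) (fun i => lHat φ hφ (b' i))
    (fun i => congrArg Units.val (lHat_spec φ hφ (b i)))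
    (fun i => congrArg Units.val (lHat_spec φ hφ (b' i)))
  show (∑ i, Ideal.Quotient.mk (Kid φ) (gw (lHat φ hφ (b i))))
    = ∑ i, Ideal.Quotient.mk (Kid φ) (gw (lHat φ hφ (b' i)))
  rw [← map_sum, ← map_sum]
  exact h

/-- `θ`. -/
def thetaHom (hφ : Function.Surjective φ) : GW S →+* GW R ⧸ Kid φ :=
  mkGW (T := GW R ⧸ Kid φ) (Ftheta φ hφ) (Ftheta_sq φ hφ) (Ftheta_rel φ hφ)

lemma compat (hφ : Function.Surjective φ) (y : GW R) :
    thetaHom φ hφ (psiHom φ y) = Ideal.Quotient.mk (Kid φ) y := by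
  have hext : ((thetaHom φ hφ).comp (psiHom φ)).comp
        (Ideal.Quotient.mk (Ideal.span (gwRel R)))
      = (Ideal.Quotient.mk (Kid φ)).comp (Ideal.Quotient.mk (Ideal.span (gwRel R))) := by
    apply MonoidAlgebra.ringHom_ext
    · intro n
      have h1 : (MonoidAlgebra.single (1 : SqCl R) n : GRing R) = n • 1 := by
        rw [show (1 : GRing R) = MonoidAlgebra.single (1 : SqCl R) (1 : ℤ) from rfl,
          MonoidAlgebra.smul_single, smul_eq_mul, mul_one]
      rw [h1, map_zsmul, map_zsmul, _root_.map_one, _root_.map_one]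
    · intro g
      obtain ⟨v, rfl⟩ := QuotientGroup.mk_surjective g
      have h1 : (MonoidAlgebra.single (QuotientGroup.mk v : SqCl R) (1 : ℤ) : GRing R)
          = gen v := rfl
      rw [h1]
      show thetaHom φ hφ (psiHom φ (gw v)) = Ideal.Quotient.mk (Kid φ) (gw v)
      rw [psiHom_gw]
      have h2 : thetaHom φ hφ (gw (Units.map (φ : R →* S) v))
          = Ftheta φ hφ (Units.map (φ : R →* S) v) := by
        have := mkGW_gw (T := GW R ⧸ Kid φ) (Ftheta φ hφ) (Ftheta_sq φ hφ) (Ftheta_rel φ hφ) (Units.map (φ : R →* S) v)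
        exact this
      rw [h2]
      exact keyL φ (Kid φ) (Kid_gen φ) _ v (lHat_spec φ hφ _)
  obtain ⟨c, rfl⟩ := Ideal.Quotient.mk_surjective y
  exact RingHom.congr_fun hext c

end Surj

end GWAux

/-- A surjective ring homomorphism `φ : R → S` between commutative local rings
induces a surjective ring homomorphism `GW(R) → GW(S)`, `[a] ↦ [φ(a)]`, whose kernel is
additively generated by the elements `[a] − [a·x]` for units `a, x` with `φ(x) = 1`; it is an
isomorphism whenever the induced map on square classes is injective. -/
theorem gw_map_of_surjective
    (R S : Type) [CommRing R] [IsLocalRing R] [CommRing S] [IsLocalRing S]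
    (φ : R →+* S) (hφ : Function.Surjective φ) :
    ∃ ψ : GW R →+* GW S,
      (∀ a : Rˣ, ψ (gw a) = gw (Units.map (φ : R →* S) a)) ∧
      Function.Surjective ψ ∧
      (∀ y : GW R, ψ y = 0 ↔
        y ∈ AddSubgroup.closure
          {z : GW R | ∃ a x : Rˣ, φ (x : R) = 1 ∧ z = gw a - gw (a * x)}) ∧
      ((∀ a b : Rˣ, cls (Units.map (φ : R →* S) a) = cls (Units.map (φ : R →* S) b) →
          cls a = cls b) → Function.Bijective ψ) := by
  classical
  have hsurj : Function.Surjective (GWAux.psiHom φ) := by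
    intro y
    obtain ⟨x, rfl⟩ := Ideal.Quotient.mk_surjective y
    induction x using MonoidAlgebra.induction_on with
    | of g =>
      obtain ⟨v, rfl⟩ := QuotientGroup.mk_surjective g
      obtain ⟨w, hw⟩ := GWAux.umap_surj φ hφ v
      exact ⟨gw w, by rw [GWAux.psiHom_gw, hw]; rfl⟩
    | add f g hf hg =>
      obtain ⟨z1, h1⟩ := hf
      obtain ⟨z2, h2⟩ := hg
      exact ⟨z1 + z2, by rw [map_add, h1, h2, map_add]⟩
    | smul r f hf =>
      obtain ⟨z, h⟩ := hf
      exact ⟨r • z, by rw [map_zsmul, h, map_zsmul]⟩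
  have hker : ∀ y : GW R, GWAux.psiHom φ y = 0 ↔
      y ∈ AddSubgroup.closure
        {z : GW R | ∃ a x : Rˣ, φ (x : R) = 1 ∧ z = gw a - gw (a * x)} := by
    intro y
    constructor
    · intro h
      have h2 := GWAux.compat φ hφ y
      rw [h, map_zero] at h2
      have h3 : y ∈ GWAux.Kid φ := Ideal.Quotient.eq_zero_iff_mem.mp h2.symm
      exact (GWAux.mem_Kid φ).mp h3
    · intro h
      refine AddSubgroup.closure_induction (p := fun z _ => GWAux.psiHom φ z = 0) ?_ ?_ ?_ ?_ h
      · rintro z ⟨a, x, hx, rfl⟩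
        rw [map_sub, GWAux.psiHom_gw, GWAux.psiHom_gw, _root_.map_mul]
        have hx1 : Units.map (φ : R →* S) x = 1 :=
          Units.ext (by rw [Units.coe_map]; simpa using hx)
        rw [hx1, mul_one, sub_self]
      · exact map_zero _
      · intro u v _ _ hu hv
        rw [map_add, hu, hv, add_zero]
      · intro u _ hu
        rw [map_neg, hu, neg_zero]
  refine ⟨GWAux.psiHom φ, fun a => GWAux.psiHom_gw φ a, hsurj, hker, ?_⟩
  intro hinj
  refine ⟨(injective_iff_map_eq_zero _).mpr ?_, hsurj⟩
  intro y hy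
  have hmem := (hker y).mp hy
  have hbot : AddSubgroup.closure
      {z : GW R | ∃ a x : Rˣ, φ (x : R) = 1 ∧ z = gw a - gw (a * x)}
      ≤ (⊥ : AddSubgroup (GW R)) := by
    rw [AddSubgroup.closure_le]
    rintro z ⟨a, x, hx, rfl⟩
    rw [SetLike.mem_coe, AddSubgroup.mem_bot]
    have hx1 : Units.map (φ : R →* S) x = 1 :=
      Units.ext (by rw [Units.coe_map]; simpa using hx)
    have hclsx : cls x = cls (1 : Rˣ) := hinj x 1 (by rw [hx1, _root_.map_one])
    have hcc : cls (a * x) = cls a := by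
      rw [GWAux.cls_mul, hclsx, GWAux.cls_one, mul_one]
    have hgen : gw (a * x) = gw a := by unfold gw gen; rw [hcc]
    rw [hgen, sub_self]
  exact AddSubgroup.mem_bot.mp (hbot hmem)


end
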